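/- Let n ∈ ℕ, let X = {x_1,…,x_n} be a finite set equipped with an ultrametric r, let a_1,…,a_n > 0 and μ = ∑_{i=1}^n a_i δ_{x_i}. Then (X,r,μ) is identifiable by family sizes if and only if for all subsets I, J ⊆ {1,…,n} with I ≠ J one has ∑_{i∈I} a_i ≠ ∑_{j∈J} a_j. -/

import Mathlib

open MeasureTheory Metric

/-- The support of a Borel measure on a metric space: the set of points all of whose
open neighborhoods have positive measure. -/
def msupp {X : Type*} [MetricSpace X] [MeasurableSpace X] (μ : Measure X) : Set X :=
  {x | ∀ ε : ℝ, 0 < ε → 0 < μ (ball x ε)}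

/-- An (ultra-)metric measure space `(X, dist, μ)` is identifiable by family sizes if for
every `h > 0` and all subsets `A¹, A² ⊆ supp μ` whose distinct points are at mutual
distance `> h`, having distinct closed `h`-enlargements (within the support) forces the
corresponding sums of closed-`h`-ball masses to differ. -/
def IdentifiableByFamilySizes {X : Type*} [MetricSpace X] [MeasurableSpace X]
    (μ : Measure X) : Prop :=
  ∀ h : ℝ, 0 < h → ∀ A1 A2 : Set X, A1 ⊆ msupp μ → A2 ⊆ msupp μ →
    (∀ x ∈ A1, ∀ y ∈ A1, x ≠ y → h < dist x y) →
    (∀ x ∈ A2, ∀ y ∈ A2, x ≠ y → h < dist x y) →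
    {y ∈ msupp μ | ∃ x ∈ A1, dist x y ≤ h} ≠ {y ∈ msupp μ | ∃ x ∈ A2, dist x y ≤ h} →
    ∑' p : A1, μ (closedBall (p : X) h) ≠ ∑' p : A2, μ (closedBall (p : X) h)

/-- A finite ultra-metric measure space `({x_1,…,x_n}, r, ∑ a_i δ_{x_i})` with all `a_i > 0`
is identifiable by family sizes iff all subset sums of the `a_i` are pairwise distinct. -/
theorem stmt10 {X : Type*} [MetricSpace X] [MeasurableSpace X] [BorelSpace X]
    (hultra : ∀ x y z : X, dist x y ≤ max (dist x z) (dist z y))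
    (n : ℕ) (x : Fin n → X) (hx : Function.Bijective x)
    (a : Fin n → ℝ) (ha : ∀ i, 0 < a i)
    (μ : Measure X)
    (hμ : μ = ∑ i : Fin n, ENNReal.ofReal (a i) • Measure.dirac (x i)) :
    IdentifiableByFamilySizes μ ↔
      ∀ I J : Finset (Fin n), I ≠ J → ∑ i ∈ I, a i ≠ ∑ j ∈ J, a j := by
  classical
  haveI : Fintype X := Fintype.ofBijective x hx
  -- measure of a measurable set
  have hmeas : ∀ s : Set X, MeasurableSet s →
      μ s = ∑ i ∈ Finset.univ.filter (fun i => x i ∈ s), ENNReal.ofReal (a i) := by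
    intro s hs
    rw [hμ, Measure.finset_sum_apply _ _ _]
    rw [Finset.sum_filter]
    refine Finset.sum_congr rfl fun i _ => ?_
    by_cases hi : x i ∈ s <;>
      simp [Measure.dirac_apply' _ hs, Set.indicator_apply, hi]
  -- support is everything
  have hsupp : msupp μ = Set.univ := by
    ext y
    simp only [msupp, Set.mem_setOf_eq, Set.mem_univ, iff_true]
    intro ε hε
    obtain ⟨i, rfl⟩ := hx.2 y
    rw [hmeas _ measurableSet_ball]
    have hmem : i ∈ Finset.univ.filter (fun j => x j ∈ ball (x i) ε) := by
      simp [mem_ball, hε]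
    have hle := Finset.single_le_sum (f := fun j => ENNReal.ofReal (a j))
      (fun _ _ => zero_le) hmem
    refine lt_of_lt_of_le ?_ hle
    simp [ENNReal.ofReal_pos, ha i]
  -- mass of closed ball
  have hball : ∀ (p : X) (h : ℝ),
      μ (closedBall p h)
        = ∑ i ∈ Finset.univ.filter (fun i => dist p (x i) ≤ h), ENNReal.ofReal (a i) := by
    intro p h
    rw [hmeas _ measurableSet_closedBall]
    refine Finset.sum_congr ?_ fun _ _ => rfl
    ext i
    simp [mem_closedBall, dist_comm]
  -- key: total mass of separated family of balls
  have hkey : ∀ (h : ℝ), 0 < h → ∀ (A : Set X),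
      (∀ p ∈ A, ∀ q ∈ A, p ≠ q → h < dist p q) →
      ∑' p : A, μ (closedBall (p : X) h)
        = ENNReal.ofReal (∑ i ∈ Finset.univ.filter
            (fun i => ∃ p ∈ A, dist p (x i) ≤ h), a i) := by
    intro h hh A hsep
    have hAfin : A.Finite := A.toFinite
    have h1 : ∑' p : A, μ (closedBall (p : X) h) = ∑ p ∈ hAfin.toFinset, μ (closedBall p h) := by
      conv_lhs => rw [show A = (hAfin.toFinset : Set X) from (Set.Finite.coe_toFinset hAfin).symm]
      exact hAfin.toFinset.tsum_subtype' fun p => μ (closedBall p h)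
    rw [h1]
    have hdisj : (hAfin.toFinset : Set (X)).Pairwise fun p q => Disjoint
        (Finset.univ.filter (fun i => dist p (x i) ≤ h))
        (Finset.univ.filter (fun i => dist q (x i) ≤ h)) := by
      intro p hp q hq hpq
      simp only [Set.Finite.coe_toFinset] at hp hq
      rw [Finset.disjoint_left]
      intro i hi1 hi2
      simp only [Finset.mem_filter] at hi1 hi2
      have := hsep p hp q hq hpq
      have : dist p q ≤ h := le_trans (hultra p q (x i)) (by
        rw [dist_comm (x i) q] at *
        exact max_le hi1.2 hi2.2)
      linarith [hsep p hp q hq hpq]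
    calc ∑ p ∈ hAfin.toFinset, μ (closedBall p h)
        = ∑ p ∈ hAfin.toFinset, ∑ i ∈ Finset.univ.filter (fun i => dist p (x i) ≤ h),
            ENNReal.ofReal (a i) := Finset.sum_congr rfl fun p _ => hball p h
      _ = ∑ i ∈ hAfin.toFinset.biUnion
            (fun p => Finset.univ.filter (fun i => dist p (x i) ≤ h)), ENNReal.ofReal (a i) :=
          (Finset.sum_biUnion hdisj).symm
      _ = ∑ i ∈ Finset.univ.filter (fun i => ∃ p ∈ A, dist p (x i) ≤ h),
            ENNReal.ofReal (a i) := by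
          refine Finset.sum_congr ?_ fun _ _ => rfl
          ext i
          simp only [Finset.mem_biUnion, Finset.mem_filter, Finset.mem_univ, true_and,
            Set.Finite.mem_toFinset]
      _ = ENNReal.ofReal (∑ i ∈ Finset.univ.filter (fun i => ∃ p ∈ A, dist p (x i) ≤ h), a i) :=
          (ENNReal.ofReal_sum_of_nonneg fun i _ => (ha i).le).symm
  constructor
  · -- identifiable → distinct subset sums
    intro hid I J hIJ hsum
    -- choose small h
    obtain ⟨h, hh, hsmall⟩ : ∃ h : ℝ, 0 < h ∧ ∀ i j : Fin n, i ≠ j → h < dist (x i) (x j) := by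
      by_cases hne : (Finset.univ.filter (fun p : Fin n × Fin n => p.1 ≠ p.2)).Nonempty
      · set s := (Finset.univ.filter (fun p : Fin n × Fin n => p.1 ≠ p.2)).image
          (fun p => dist (x p.1) (x p.2)) with hs
        have hsne : s.Nonempty := hne.image _
        refine ⟨s.min' hsne / 2, ?_, ?_⟩
        · have := s.min'_mem hsne
          simp only [hs, Finset.mem_image, Finset.mem_filter] at this
          obtain ⟨p, ⟨_, hp⟩, hps⟩ := this
          have : 0 < dist (x p.1) (x p.2) := by
            rw [dist_pos]; exact fun hc => hp (hx.1 hc)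
          linarith [hps]
        · intro i j hij
          have hmem : dist (x i) (x j) ∈ s := by
            simp only [hs, Finset.mem_image, Finset.mem_filter]
            exact ⟨(i, j), ⟨Finset.mem_univ _, hij⟩, rfl⟩
          have h1 := s.min'_le _ hmem
          have h2 : 0 < dist (x i) (x j) := by
            rw [dist_pos]; exact fun hc => hij (hx.1 hc)
          have h3 : 0 < s.min' hsne := by
            have := s.min'_mem hsne
            simp only [hs, Finset.mem_image, Finset.mem_filter] at this
            obtain ⟨p, ⟨_, hp⟩, hps⟩ := this
            have : 0 < dist (x p.1) (x p.2) := by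
              rw [dist_pos]; exact fun hc => hp (hx.1 hc)
            linarith
          linarith
      · refine ⟨1, one_pos, fun i j hij => absurd ?_ hne⟩
        exact ⟨(i, j), by simp [hij]⟩
    set I' := I \ J with hI'
    set J' := J \ I with hJ'
    have hne' : I' ≠ J' := by
      intro hc
      have h1 : I' = ∅ := by
        ext i; simp only [Finset.notMem_empty, iff_false]
        intro hi
        have := hi
        rw [hc] at this
        simp only [hJ', Finset.mem_sdiff] at this
        simp only [hI', Finset.mem_sdiff] at hi
        exact this.2 hi.1
      have h2 : J' = ∅ := hc ▸ h1
      apply hIJ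
      ext i
      constructor <;> intro hi
      · by_contra hj
        have : i ∈ I' := by simp [hI', hi, hj]
        simp [h1] at this
      · by_contra hj
        have : i ∈ J' := by simp [hJ', hi, hj]
        simp [h2] at this
    have hsum' : ∑ i ∈ I', a i = ∑ i ∈ J', a i := by
      have e1 := Finset.sum_inter_add_sum_sdiff I J a
      have e2 := Finset.sum_inter_add_sum_sdiff J I a
      rw [Finset.inter_comm] at e2
      simp only [← hI'] at e1
      simp only [← hJ'] at e2
      linarith [e1, e2, hsum]
    have hsep : ∀ (A : Set X), A ⊆ Set.range x →
        (∀ p ∈ A, ∀ q ∈ A, p ≠ q → h < dist p q) := by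
      intro A hA p hp q hq hpq
      obtain ⟨i, rfl⟩ := hA hp
      obtain ⟨j, rfl⟩ := hA hq
      exact hsmall i j (fun hc => hpq (hc ▸ rfl))
    have hrange : ∀ B : Finset (Fin n), (x '' ↑B : Set X) ⊆ Set.range x := by
      intro B y hy; obtain ⟨i, _, rfl⟩ := hy; exact ⟨i, rfl⟩
    have hfilt : ∀ B : Finset (Fin n),
        Finset.univ.filter (fun i => ∃ p ∈ (x '' ↑B : Set X), dist p (x i) ≤ h) = B := by
      intro B
      ext i
      simp only [Finset.mem_filter, Finset.mem_univ, true_and, Set.mem_image]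
      constructor
      · rintro ⟨p, ⟨j, hj, rfl⟩, hd⟩
        rcases eq_or_ne j i with rfl | hji
        · exact hj
        · exact absurd hd (not_le.2 (hsmall j i hji))
      · intro hi
        exact ⟨x i, ⟨i, hi, rfl⟩, by simp [hh.le]⟩
    have heq : ∑' p : (x '' ↑I' : Set X), μ (closedBall (p : X) h)
        = ∑' p : (x '' ↑J' : Set X), μ (closedBall (p : X) h) := by
      rw [hkey h hh (x '' ↑I') (hsep _ (hrange I')), hkey h hh (x '' ↑J') (hsep _ (hrange J')),
        hfilt I', hfilt J', hsum']
    refine hid h hh (x '' ↑I') (x '' ↑J') (by simp [hsupp]) (by simp [hsupp])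
      (hsep _ (hrange I')) (hsep _ (hrange J')) ?_ heq
    -- enlargements differ
    intro hcE
    apply hne'
    have hE : ∀ B : Finset (Fin n),
        {y ∈ msupp μ | ∃ p ∈ (x '' ↑B : Set X), dist p y ≤ h} = (x '' ↑B : Set X) := by
      intro B
      ext y
      simp only [Set.mem_setOf_eq, hsupp, Set.mem_univ, true_and]
      constructor
      · rintro ⟨p, ⟨j, hj, rfl⟩, hd⟩
        obtain ⟨i, rfl⟩ := hx.2 y
        rcases eq_or_ne j i with rfl | hji
        · exact ⟨j, hj, rfl⟩
        · exact absurd hd (not_le.2 (hsmall j i hji))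
      · rintro ⟨i, hi, rfl⟩
        exact ⟨x i, ⟨i, hi, rfl⟩, by simp [hh.le]⟩
    rw [hE I', hE J'] at hcE
    ext i
    constructor <;> intro hi
    · have hm : x i ∈ (x '' ↑J' : Set X) := by rw [← hcE]; exact ⟨i, hi, rfl⟩
      obtain ⟨j, hj, hji⟩ := hm
      rwa [← hx.1 hji]
    · have hm : x i ∈ (x '' ↑I' : Set X) := by rw [hcE]; exact ⟨i, hi, rfl⟩
      obtain ⟨j, hj, hji⟩ := hm
      rwa [← hx.1 hji]
  · -- distinct subset sums → identifiable
    intro hsums h hh A1 A2 _ _ hsep1 hsep2 hEne heq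
    set I1 := Finset.univ.filter (fun i => ∃ p ∈ A1, dist p (x i) ≤ h) with hI1
    set I2 := Finset.univ.filter (fun i => ∃ p ∈ A2, dist p (x i) ≤ h) with hI2
    rw [hkey h hh A1 hsep1, hkey h hh A2 hsep2, ← hI1, ← hI2] at heq
    have hsum : ∑ i ∈ I1, a i = ∑ i ∈ I2, a i := by
      rwa [ENNReal.ofReal_eq_ofReal_iff
        (Finset.sum_nonneg fun i _ => (ha i).le)
        (Finset.sum_nonneg fun i _ => (ha i).le)] at heq
    have hIeq : I1 = I2 := by
      by_contra hc
      exact hsums I1 I2 hc hsum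
    apply hEne
    ext y
    obtain ⟨i, rfl⟩ := hx.2 y
    simp only [Set.mem_setOf_eq, hsupp, Set.mem_univ, true_and]
    constructor
    · intro hmem
      have : i ∈ I1 := by simp [hI1, hmem]
      rw [hIeq] at this
      simpa [hI2] using this
    · intro hmem
      have : i ∈ I2 := by simp [hI2, hmem]
      rw [← hIeq] at this
      simpa [hI1] using this
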